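/- For q > 0, p ≥ 0, α ∈ (−∞,1) with α ≠ 0, and any λ̄ ∈ ℝ, one has: Ū = (1−α)·R̄, m̄ = (1−α)·v̄, and f̄ = (1−α)·ḡ, where f̄ := p²·m̄² + 2·γ̄·m̄ − p²·Ū + α(α−1)·(p²·v̄² − (1−β)²·λ̄²) and ḡ := p²·v̄² + 2·ρ̄·v̄ − p²·R̄ − β(1−β)·λ̄². -/
import Mathlib


/-- For `q > 0`, `p ≥ 0`, `α < 1`, `α ≠ 0`, and any `λ̄ ∈ ℝ`:
`Ū = (1−α)·R̄`, `m̄ = (1−α)·v̄`, and `f̄ = (1−α)·ḡ`. -/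
theorem stmt_13 (p q α β : ℝ) (hq : 0 < q) (hp : 0 ≤ p)
    (hα1 : α < 1) (hα0 : α ≠ 0) (hαβ : 1 / α + 1 / β = 1)
    (bbar K Rbar : ℝ)
    (hbbar : bbar = -(1 - β) * p - q)
    (hK : K = Real.sqrt (bbar ^ 2 + β * (1 - β) * p ^ 2))
    (hRbar0 : p = 0 → Rbar = β * (1 - β) / (2 * q))
    (hRbar1 : 0 < p → Rbar = (bbar + K) / p ^ 2)
    (lambar rhobar vbar : ℝ)
    (hrhobar : rhobar = -β * p * lambar)
    (hvbar : (bbar - p ^ 2 * Rbar) * vbar + β * (1 - β) * lambar - Rbar * rhobar = 0)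
    (dbar Q Ubar : ℝ)
    (hdbar : dbar = bbar - α * p ^ 2 * Rbar)
    (hQ : Q = β * (1 - (1 - α) ^ 2 * p ^ 2 * Rbar ^ 2))
    (hUbar0 : p = 0 → -2 * dbar * Ubar - Q = 0)
    (hUbar1 : 0 < p → Ubar = (dbar + Real.sqrt (dbar ^ 2 + p ^ 2 * Q)) / p ^ 2)
    (hbar gambar mbar fbar gbar : ℝ)
    (hhbar : hbar = α * (α - 1) * p ^ 2 * Rbar * vbar - β * lambar)
    (hgambar : gambar = rhobar + α * p ^ 2 * vbar)
    (hmbar : (dbar - p ^ 2 * Ubar) * mbar - hbar - Ubar * gambar = 0)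
    (hfbar : fbar = p ^ 2 * mbar ^ 2 + 2 * gambar * mbar - p ^ 2 * Ubar
      + α * (α - 1) * (p ^ 2 * vbar ^ 2 - (1 - β) ^ 2 * lambar ^ 2))
    (hgbar : gbar = p ^ 2 * vbar ^ 2 + 2 * rhobar * vbar - p ^ 2 * Rbar
      - β * (1 - β) * lambar ^ 2) :
    Ubar = (1 - α) * Rbar ∧ mbar = (1 - α) * vbar ∧ fbar = (1 - α) * gbar := by
  have hα1' : (0:ℝ) < 1 - α := by linarith
  have hβ0 : β ≠ 0 := by
    intro h
    rw [h, div_zero, add_zero] at hαβ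
    have : α = 1 := by field_simp at hαβ; linarith
    linarith
  have hsum : α + β = α * β := by field_simp at hαβ; linarith
  have hkey : (1 - α) * (1 - β) = 1 := by linear_combination -hsum
  have h1b : (0:ℝ) < 1 - β := by nlinarith [hkey]
  subst hbbar hdbar hQ hrhobar hhbar hgambar hfbar hgbar
  rcases eq_or_lt_of_le hp with h0 | hppos
  · -- p = 0
    have hp0 : p = 0 := h0.symm
    subst hp0
    have hR := hRbar0 rfl
    have hU := hUbar0 rfl
    norm_num at hR hU hvbar hmbar
    -- hU : 2 * q * Ubar - β = 0
    -- hvbar : -(q * vbar) + β * (1 - β) * lambar = 0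
    -- hmbar : -(q * mbar) + β * lambar = 0
    have hUval : Ubar = β / (2 * q) := by
      field_simp
      linear_combination hU
    have hG1 : Ubar = (1 - α) * Rbar := by
      rw [hUval, hR,
        show (1 - α) * (β * (1 - β) / (2 * q)) = ((1 - α) * (1 - β)) * β / (2 * q) by ring,
        hkey, one_mul]
    have hvval : q * vbar = β * (1 - β) * lambar := by linear_combination -hvbar
    have hmval : q * mbar = β * lambar := by linear_combination -hmbar
    have hG2 : mbar = (1 - α) * vbar := by
      have h : q * mbar = q * ((1 - α) * vbar) := by
        linear_combination hmval - (1 - α) * hvval - β * lambar * hkey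
      exact mul_left_cancel₀ (ne_of_gt hq) h
    refine ⟨hG1, hG2, ?_⟩
    rw [hG1, hG2]
    linear_combination (1 - α) * (1 - β) * lambar ^ 2 * hsum
  · -- p > 0
    have hp2 : p ^ 2 ≠ 0 := by positivity
    have hin : (0:ℝ) < (-(1 - β) * p - q) ^ 2 + β * (1 - β) * p ^ 2 := by
      nlinarith [mul_nonneg (mul_nonneg h1b.le hp) hp,
        mul_nonneg (mul_nonneg h1b.le hp) hq.le, mul_pos hq hq]
    have hK2 : K ^ 2 = (-(1 - β) * p - q) ^ 2 + β * (1 - β) * p ^ 2 := by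
      rw [hK]; exact Real.sq_sqrt hin.le
    have hKpos : 0 < K := by
      rw [hK]; exact Real.sqrt_pos.mpr hin
    have hpR : p ^ 2 * Rbar = (-(1 - β) * p - q) + K := by
      rw [hRbar1 hppos]; field_simp
    have hSval : (-(1 - β) * p - q - α * p ^ 2 * Rbar) ^ 2
        + p ^ 2 * (β * (1 - (1 - α) ^ 2 * p ^ 2 * Rbar ^ 2)) = K ^ 2 := by
      linear_combination
        (-α * ((-(1 - β) * p - q) - α * p ^ 2 * Rbar + (1 - α) * (-(1 - β) * p - q) - α * K)
          - β * (1 - α) ^ 2 * (p ^ 2 * Rbar + (-(1 - β) * p - q) + K)) * hpR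
        - (1 - α) * hK2 - β * p ^ 2 * hkey
        - (1 - α) * ((-(1 - β) * p - q) + K) ^ 2 * hsum
    have hG1 : Ubar = (1 - α) * Rbar := by
      rw [hUbar1 hppos, hSval, Real.sqrt_sq hKpos.le, div_eq_iff hp2]
      linear_combination -hpR
    rw [hG1] at hmbar
    have hG2 : mbar = (1 - α) * vbar := by
      have h : K * mbar = K * ((1 - α) * vbar) := by
        linear_combination -hmbar + (1 - α) * hvbar - β * lambar * hkey
          + ((1 - α) * vbar - mbar) * hpR
      exact mul_left_cancel₀ (ne_of_gt hKpos) h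
    refine ⟨hG1, hG2, ?_⟩
    rw [hG1, hG2]
    linear_combination (1 - α) * (1 - β) * lambar ^ 2 * hsum
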